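/- Let d ≥ 1 and let k, l be real numbers with k < d, l < d and k + l > d. Then there exists C > 0 such that for all x ∈ ℤ^d, Σ_{y∈ℤ^d} ⟨x-y⟩^{-k}⟨y⟩^{-l} ≤ C⟨x⟩^{d-k-l}. -/

import Mathlib

open Finset

/-- Japanese bracket `⟨x⟩ = (1 + |x|²)^{1/2}` for `x ∈ ℤ^d`. -/
noncomputable def jap {d : ℕ} (x : Fin d → ℤ) : ℝ :=
  (1 + ∑ j, ((x j : ℝ)) ^ 2) ^ ((1 : ℝ) / 2)

namespace Stmt5

variable {d : ℕ}

/-- sup norm as a natural number -/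
def Nm (x : Fin d → ℤ) : ℕ := Finset.univ.sup fun j => (x j).natAbs

lemma natAbs_le_Nm (x : Fin d → ℤ) (j : Fin d) : (x j).natAbs ≤ Nm x :=
  Finset.le_sup (f := fun j => (x j).natAbs) (Finset.mem_univ j)

lemma Nm_le_iff {x : Fin d → ℤ} {n : ℕ} : Nm x ≤ n ↔ ∀ j, (x j).natAbs ≤ n := by
  simp [Nm, Finset.sup_le_iff]

lemma Nm_triangle (x y : Fin d → ℤ) : Nm x ≤ Nm (x - y) + Nm y := by
  refine Finset.sup_le fun j _ => ?_
  have h : x j = (x - y) j + y j := by simp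
  rw [h]
  exact le_trans (Int.natAbs_add_le _ _)
    (add_le_add (natAbs_le_Nm _ j) (natAbs_le_Nm _ j))

lemma one_le_S (x : Fin d → ℤ) : (1:ℝ) ≤ 1 + ∑ j, ((x j : ℝ)) ^ 2 := by
  have : (0:ℝ) ≤ ∑ j, ((x j : ℝ)) ^ 2 := Finset.sum_nonneg fun j _ => sq_nonneg _
  linarith

lemma jap_eq_sqrt (x : Fin d → ℤ) :
    jap x = Real.sqrt (1 + ∑ j, ((x j : ℝ)) ^ 2) := by
  rw [jap, Real.sqrt_eq_rpow]

lemma one_le_jap (x : Fin d → ℤ) : 1 ≤ jap x := by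
  rw [jap_eq_sqrt]
  have := Real.sqrt_le_sqrt (one_le_S x)
  simpa using this

lemma jap_pos (x : Fin d → ℤ) : 0 < jap x := lt_of_lt_of_le one_pos (one_le_jap x)

lemma sq_cast_natAbs (a : ℤ) : ((a.natAbs : ℝ))^2 = ((a:ℝ))^2 := by
  have : ((a.natAbs : ℝ)) = |(a:ℝ)| := by
    rw [← Int.cast_natCast, Int.natCast_natAbs]
    push_cast
    ring
  rw [this, sq_abs]

lemma le_jap (hd : 1 ≤ d) (x : Fin d → ℤ) : ((Nm x : ℝ) + 1) / 2 ≤ jap x := by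
  have : Nonempty (Fin d) := ⟨⟨0, hd⟩⟩
  obtain ⟨j₀, _, hj₀⟩ := Finset.exists_mem_eq_sup (Finset.univ : Finset (Fin d))
    Finset.univ_nonempty (fun j => (x j).natAbs)
  have h1 : ((Nm x : ℝ))^2 ≤ ((x j₀ : ℝ))^2 := by
    rw [← sq_cast_natAbs]
    rw [show Nm x = (x j₀).natAbs from hj₀]
  have h2 : ((x j₀ : ℝ))^2 ≤ ∑ j, ((x j : ℝ))^2 :=
    Finset.single_le_sum (fun j _ => sq_nonneg ((x j : ℝ))) (Finset.mem_univ j₀)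
  rw [jap_eq_sqrt]
  have h3 : (((Nm x : ℝ) + 1) / 2)^2 ≤ 1 + ∑ j, ((x j : ℝ))^2 := by
    have hN : (0:ℝ) ≤ (Nm x : ℝ) := Nat.cast_nonneg _
    nlinarith
  calc ((Nm x : ℝ) + 1) / 2 = Real.sqrt ((((Nm x : ℝ) + 1) / 2)^2) := by
        rw [Real.sqrt_sq (by positivity)]
    _ ≤ _ := Real.sqrt_le_sqrt h3

lemma jap_le (hd : 1 ≤ d) (x : Fin d → ℤ) :
    jap x ≤ Real.sqrt d * ((Nm x : ℝ) + 1) := by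
  have h1 : ∀ j, ((x j : ℝ))^2 ≤ ((Nm x : ℝ))^2 := by
    intro j
    rw [← sq_cast_natAbs]
    have := natAbs_le_Nm x j
    have : ((x j).natAbs : ℝ) ≤ (Nm x : ℝ) := by exact_mod_cast this
    nlinarith [Nat.cast_nonneg (α := ℝ) (x j).natAbs]
  have h2 : (1:ℝ) + ∑ j, ((x j : ℝ))^2 ≤ (d:ℝ) * ((Nm x : ℝ) + 1)^2 := by
    have hs : ∑ j, ((x j : ℝ))^2 ≤ (d:ℝ) * ((Nm x : ℝ))^2 := by
      calc ∑ j, ((x j : ℝ))^2 ≤ ∑ _j : Fin d, ((Nm x : ℝ))^2 :=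
            Finset.sum_le_sum fun j _ => h1 j
        _ = (d:ℝ) * ((Nm x : ℝ))^2 := by simp [mul_comm]
    have hd1 : (1:ℝ) ≤ (d:ℝ) := by exact_mod_cast hd
    have hN : (0:ℝ) ≤ (Nm x : ℝ) := Nat.cast_nonneg _
    nlinarith
  rw [jap_eq_sqrt]
  calc Real.sqrt (1 + ∑ j, ((x j : ℝ))^2) ≤ Real.sqrt ((d:ℝ) * ((Nm x : ℝ) + 1)^2) :=
        Real.sqrt_le_sqrt h2
    _ = Real.sqrt d * ((Nm x : ℝ) + 1) := by
        rw [Real.sqrt_mul (Nat.cast_nonneg d), Real.sqrt_sq (by positivity)]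

/-- The sup-norm ball in `ℤ^d` as a finset. -/
noncomputable def ball (d R : ℕ) : Finset (Fin d → ℤ) :=
  Fintype.piFinset fun _ => Finset.Icc (-(R:ℤ)) (R:ℤ)

lemma mem_ball {R : ℕ} {y : Fin d → ℤ} : y ∈ ball d R ↔ Nm y ≤ R := by
  rw [ball, Fintype.mem_piFinset, Nm_le_iff]
  constructor
  · intro h j; have := h j; rw [Finset.mem_Icc] at this; omega
  · intro h j; rw [Finset.mem_Icc]; have := h j; omega

lemma ball_subset {R S : ℕ} (h : R ≤ S) : ball d R ⊆ ball d S := by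
  intro y hy
  rw [mem_ball] at *
  omega

lemma card_ball (R : ℕ) : (ball d R).card = (2*R+1)^d := by
  rw [ball, Fintype.card_piFinset]
  have h : ((R:ℤ) + 1 - -(R:ℤ)).toNat = 2*R+1 := by omega
  simp only [Int.card_Icc]
  rw [show (R:ℤ) + 1 - -(R:ℤ) = (R:ℤ)+1+(R:ℤ) by ring] at h
  simp [h]

lemma card_shell_le (hd : 1 ≤ d) (n : ℕ) :
    (((ball d (n+1)) \ (ball d n)).card : ℝ) ≤
      (2*(d:ℝ)*3^(d-1)) * ((n:ℝ)+2)^(d-1) := by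
  rw [Finset.card_sdiff_of_subset (ball_subset (Nat.le_succ n)), card_ball, card_ball]
  have hle : (2*n+1)^d ≤ (2*(n+1)+1)^d :=
    Nat.pow_le_pow_left (by omega) d
  rw [Nat.cast_sub hle]
  push_cast
  have hgeom := geom_sum₂_mul (2*(n:ℝ)+3) (2*(n:ℝ)+1) d
  have hx : (2*((n:ℝ)+1)+1) = 2*(n:ℝ)+3 := by ring
  rw [hx, ← hgeom]
  have hterm : ∀ i ∈ Finset.range d,
      (2*(n:ℝ)+3)^i * (2*(n:ℝ)+1)^(d-1-i) ≤ (3*((n:ℝ)+2))^(d-1) := by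
    intro i hi
    rw [Finset.mem_range] at hi
    calc (2*(n:ℝ)+3)^i * (2*(n:ℝ)+1)^(d-1-i)
        ≤ (2*(n:ℝ)+3)^i * (2*(n:ℝ)+3)^(d-1-i) := by
          apply mul_le_mul_of_nonneg_left _ (by positivity)
          exact pow_le_pow_left₀ (by positivity) (by linarith) _
      _ = (2*(n:ℝ)+3)^(d-1) := by
          rw [← pow_add]
          congr 1
          omega
      _ ≤ (3*((n:ℝ)+2))^(d-1) := pow_le_pow_left₀ (by positivity) (by linarith) _
  calc (∑ i ∈ Finset.range d, (2*(n:ℝ)+3)^i * (2*(n:ℝ)+1)^(d-1-i)) * (2*(n:ℝ)+3 - (2*(n:ℝ)+1))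
      = (∑ i ∈ Finset.range d, (2*(n:ℝ)+3)^i * (2*(n:ℝ)+1)^(d-1-i)) * 2 := by ring_nf
    _ ≤ ((d:ℝ) * (3*((n:ℝ)+2))^(d-1)) * 2 := by
        apply mul_le_mul_of_nonneg_right _ (by norm_num)
        calc (∑ i ∈ Finset.range d, (2*(n:ℝ)+3)^i * (2*(n:ℝ)+1)^(d-1-i))
            ≤ ∑ _i ∈ Finset.range d, (3*((n:ℝ)+2))^(d-1) := Finset.sum_le_sum hterm
          _ = (d:ℝ) * (3*((n:ℝ)+2))^(d-1) := by simp [mul_comm]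
    _ = (2*(d:ℝ)*3^(d-1)) * ((n:ℝ)+2)^(d-1) := by
        rw [mul_pow]
        ring

lemma sum_ball_le (hd : 1 ≤ d) (f : (Fin d → ℤ) → ℝ) (G : ℕ → ℝ)
    (hG : ∀ n, 0 ≤ G n) (hf : ∀ y, f y ≤ G (Nm y)) (R : ℕ) :
    ∑ y ∈ ball d R, f y ≤
      ∑ n ∈ Finset.range (R+1), (2*(d:ℝ)*3^(d-1)) * ((n:ℝ)+1)^(d-1) * G n := by
  induction R with
  | zero =>
    have hmem : ∀ y ∈ ball d 0, f y ≤ G 0 := by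
      intro y hy
      rw [mem_ball] at hy
      have : Nm y = 0 := Nat.le_zero.mp hy
      simpa [this] using hf y
    have h1 : ∑ y ∈ ball d 0, f y ≤ (ball d 0).card • G 0 :=
      Finset.sum_le_card_nsmul _ _ _ hmem
    have hcard : (ball d 0).card = 1 := by simp [card_ball]
    rw [hcard] at h1
    simp only [one_smul] at h1
    have hC : (1:ℝ) ≤ 2*(d:ℝ)*3^(d-1) := by
      have : (1:ℝ) ≤ (d:ℝ) := by exact_mod_cast hd
      have h3 : (1:ℝ) ≤ 3^(d-1) := one_le_pow₀ (by norm_num)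
      nlinarith
    calc ∑ y ∈ ball d 0, f y ≤ G 0 := h1
      _ ≤ (2*(d:ℝ)*3^(d-1)) * G 0 := le_mul_of_one_le_left (hG 0) hC
      _ = ∑ n ∈ Finset.range 1, (2*(d:ℝ)*3^(d-1)) * ((n:ℝ)+1)^(d-1) * G n := by
          simp
  | succ R ih =>
    have hsplit := Finset.sum_sdiff (f := f) (ball_subset (Nat.le_succ R))
    rw [← hsplit, Finset.sum_range_succ]
    have hshell : ∑ y ∈ ball d (R+1) \ ball d R, f y ≤
        (2*(d:ℝ)*3^(d-1)) * (((R:ℝ)+1)+1)^(d-1) * G (R+1) := by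
      have hmem : ∀ y ∈ ball d (R+1) \ ball d R, f y ≤ G (R+1) := by
        intro y hy
        rw [Finset.mem_sdiff, mem_ball, mem_ball] at hy
        have : Nm y = R+1 := by omega
        calc f y ≤ G (Nm y) := hf y
          _ = G (R+1) := by rw [this]
      have h1 : ∑ y ∈ ball d (R+1) \ ball d R, f y ≤
          ((ball d (R+1) \ ball d R).card : ℝ) * G (R+1) := by
        have := Finset.sum_le_card_nsmul _ _ _ hmem
        simpa [nsmul_eq_mul] using this
      calc ∑ y ∈ ball d (R+1) \ ball d R, f y
          ≤ ((ball d (R+1) \ ball d R).card : ℝ) * G (R+1) := h1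
        _ ≤ ((2*(d:ℝ)*3^(d-1)) * ((R:ℝ)+2)^(d-1)) * G (R+1) :=
            mul_le_mul_of_nonneg_right (card_shell_le hd R) (hG _)
        _ = (2*(d:ℝ)*3^(d-1)) * (((R:ℝ)+1)+1)^(d-1) * G (R+1) := by ring_nf
    have : (((R+1:ℕ):ℝ)) = (R:ℝ)+1 := by push_cast; ring
    rw [this]
    linarith [ih]

lemma antitoneOn_aux (c : ℝ) (hc : c ≤ 0) (x₀ : ℝ) (hx₀ : 0 ≤ x₀) (a : ℝ) :
    AntitoneOn (fun x : ℝ => (x+1)^c) (Set.Icc x₀ (x₀+a)) := by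
  intro u hu v hv huv
  exact Real.rpow_le_rpow_of_nonpos (by linarith [hu.1]) (by linarith) hc

lemma integ_aux (c : ℝ) (hc : c ≠ -1) (x₀ : ℝ) (hx₀ : 0 ≤ x₀) (b : ℝ) (hb : x₀ ≤ b) :
    ∫ x in x₀..b, (x+1)^c = ((b+1)^(c+1) - (x₀+1)^(c+1))/(c+1) := by
  have h1 : ∫ x in x₀..b, (x+1)^c = ∫ x in (x₀+1)..(b+1), x^c := by
    have := intervalIntegral.integral_comp_add_right (a := x₀) (b := b)
      (fun x : ℝ => x^c) 1
    simpa using this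
  rw [h1]
  rw [integral_rpow]
  right
  refine ⟨hc, ?_⟩
  intro hmem
  rw [Set.mem_uIcc] at hmem
  rcases hmem with ⟨h1', h2'⟩ | ⟨h1', h2'⟩ <;> linarith

lemma N2 (c : ℝ) (hc : -1 < c) :
    ∃ A : ℝ, 0 < A ∧ ∀ R : ℕ,
      ∑ n ∈ Finset.range (R+1), ((n:ℝ)+1)^c ≤ A * ((R:ℝ)+1)^(c+1) := by
  have hc1 : (0:ℝ) < c + 1 := by linarith
  rcases le_or_gt 0 c with h0 | h0
  · refine ⟨1, one_pos, fun R => ?_⟩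
    rw [one_mul]
    calc ∑ n ∈ Finset.range (R+1), ((n:ℝ)+1)^c
        ≤ ∑ _n ∈ Finset.range (R+1), ((R:ℝ)+1)^c := by
          apply Finset.sum_le_sum
          intro n hn
          rw [Finset.mem_range] at hn
          apply Real.rpow_le_rpow (by positivity) _ h0
          have : (n:ℝ) ≤ (R:ℝ) := by exact_mod_cast Nat.lt_succ_iff.mp hn
          linarith
      _ = ((R:ℝ)+1) * ((R:ℝ)+1)^c := by
          rw [Finset.sum_const, Finset.card_range, nsmul_eq_mul]
          push_cast; ring
      _ = ((R:ℝ)+1)^(c+1) := by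
          rw [Real.rpow_add_one (by positivity)]
          ring
  · refine ⟨1 + 1/(c+1), by positivity, fun R => ?_⟩
    have key : ∑ n ∈ Finset.range (R+1), ((n:ℝ)+1)^c
        = 1 + ∑ i ∈ Finset.range R, (((i:ℝ)+1)+1)^c := by
      rw [Finset.sum_range_succ']
      push_cast
      rw [show ((0:ℝ)+1)^c = 1 by norm_num [Real.one_rpow]]
      ring
    have hsum := (antitoneOn_aux c h0.le 0 le_rfl R).sum_le_integral
    simp only [zero_add] at hsum
    push_cast at hsum
    have hint : ∫ x in (0:ℝ)..(R:ℝ), (x+1)^c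
        = (((R:ℝ)+1)^(c+1) - 1)/(c+1) := by
      rw [integ_aux c (by linarith) 0 le_rfl (R:ℝ) (Nat.cast_nonneg R)]
      norm_num
    rw [hint] at hsum
    have h1 : (1:ℝ) ≤ ((R:ℝ)+1)^(c+1) := by
      calc (1:ℝ) = 1^(c+1) := (Real.one_rpow _).symm
        _ ≤ ((R:ℝ)+1)^(c+1) :=
          Real.rpow_le_rpow (by norm_num) (by linarith [Nat.cast_nonneg (α := ℝ) R]) hc1.le
    rw [key]
    have h2 : ((((R:ℝ)+1)^(c+1)) - 1)/(c+1) ≤ (((R:ℝ)+1)^(c+1))/(c+1) := by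
      gcongr
      linarith
    calc 1 + ∑ i ∈ Finset.range R, (((i:ℝ)+1)+1)^c
        ≤ 1 + ((((R:ℝ)+1)^(c+1)) - 1)/(c+1) := by linarith [hsum]
      _ ≤ (((R:ℝ)+1)^(c+1)) + (((R:ℝ)+1)^(c+1))/(c+1) := by linarith [h1, h2]
      _ = (1 + 1/(c+1)) * (((R:ℝ)+1)^(c+1)) := by ring

lemma N1 (c : ℝ) (hc : c < -1) :
    ∃ A : ℝ, 0 < A ∧ ∀ m M : ℕ,
      ∑ n ∈ Finset.Ico m M, ((n:ℝ)+1)^c ≤ A * ((m:ℝ)+1)^(c+1) := by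
  have hc1 : c + 1 < 0 := by linarith
  have hn2 : (0:ℝ) < -(c+1) := by linarith
  have hA : (0:ℝ) < 1 + 1/(-(c+1)) := by
    have := one_div_pos.mpr hn2
    linarith
  refine ⟨1 + 1/(-(c+1)), hA, fun m M => ?_⟩
  rcases le_or_gt M m with hMm | hmM
  · rw [Finset.Ico_eq_empty (by omega)]
    simp only [Finset.sum_empty]
    positivity
  · have key : ∑ n ∈ Finset.Ico m M, ((n:ℝ)+1)^c
        = ((m:ℝ)+1)^c + ∑ i ∈ Finset.range (M-(m+1)), (((m:ℝ)+((i:ℝ)+1))+1)^c := by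
      rw [Finset.sum_eq_sum_Ico_succ_bot hmM]
      congr 1
      rw [Finset.sum_Ico_eq_sum_range]
      apply Finset.sum_congr rfl
      intro i _
      push_cast
      ring_nf
    have hsum := (antitoneOn_aux c (by linarith) (m:ℝ) (Nat.cast_nonneg m)
      (M-(m+1) : ℕ)).sum_le_integral
    have hint : ∫ x in (m:ℝ)..((m:ℝ)+((M-(m+1):ℕ):ℝ)), (x+1)^c
        = ((((m:ℝ)+((M-(m+1):ℕ):ℝ))+1)^(c+1) - ((m:ℝ)+1)^(c+1))/(c+1) := by
      apply integ_aux c (by linarith) (m:ℝ) (Nat.cast_nonneg m)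
      linarith [Nat.cast_nonneg (α := ℝ) (M-(m+1))]
    rw [hint] at hsum
    have hX : (0:ℝ) ≤ (((m:ℝ)+((M-(m+1):ℕ):ℝ))+1)^(c+1) := Real.rpow_nonneg (by positivity) _
    have hm1 : (0:ℝ) < (m:ℝ)+1 := by positivity
    have htail : ((((m:ℝ)+((M-(m+1):ℕ):ℝ))+1)^(c+1) - ((m:ℝ)+1)^(c+1))/(c+1)
        ≤ ((m:ℝ)+1)^(c+1) * (1/(-(c+1))) := by
      have e1 : ((((m:ℝ)+((M-(m+1):ℕ):ℝ))+1)^(c+1) - ((m:ℝ)+1)^(c+1))/(c+1)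
          = (((m:ℝ)+1)^(c+1) - (((m:ℝ)+((M-(m+1):ℕ):ℝ))+1)^(c+1))/(-(c+1)) := by
        rw [div_neg, ← neg_div, neg_sub]
      have e2 : ((m:ℝ)+1)^(c+1) * (1/(-(c+1))) = ((m:ℝ)+1)^(c+1)/(-(c+1)) := by ring
      rw [e1, e2]
      gcongr
      linarith
    have hlow : ((m:ℝ)+1)^c ≤ ((m:ℝ)+1)^(c+1) :=
      Real.rpow_le_rpow_of_exponent_le (by linarith [Nat.cast_nonneg (α := ℝ) m]) (by linarith)
    have hmatch : ∑ i ∈ Finset.range (M-(m+1)), (((m:ℝ)+((i:ℝ)+1))+1)^c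
        ≤ ((((m:ℝ)+((M-(m+1):ℕ):ℝ))+1)^(c+1) - ((m:ℝ)+1)^(c+1))/(c+1) := by
      refine le_trans (le_of_eq ?_) hsum
      apply Finset.sum_congr rfl
      intro i _
      push_cast
      ring_nf
    rw [key]
    calc ((m:ℝ)+1)^c + ∑ i ∈ Finset.range (M-(m+1)), (((m:ℝ)+((i:ℝ)+1))+1)^c
        ≤ ((m:ℝ)+1)^(c+1) + ((m:ℝ)+1)^(c+1) * (1/(-(c+1))) := by
          have := hmatch.trans htail
          linarith [hlow]
      _ = (1 + 1/(-(c+1))) * ((m:ℝ)+1)^(c+1) := by ring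

lemma jap_rpow_le (hd : 1 ≤ d) (y : Fin d → ℤ) {r : ℝ} (hr : 0 < r) :
    jap y ^ (-r) ≤ 2^r * ((Nm y : ℝ)+1)^(-r) := by
  have h1 : ((Nm y : ℝ)+1)/2 ≤ jap y := by
    have := le_jap hd y
    linarith
  have h2 : (0:ℝ) < ((Nm y : ℝ)+1)/2 := by positivity
  calc jap y ^ (-r) ≤ (((Nm y : ℝ)+1)/2) ^ (-r) :=
        Real.rpow_le_rpow_of_nonpos h2 h1 (by linarith)
    _ = 2^r * ((Nm y : ℝ)+1)^(-r) := by
        rw [Real.div_rpow (by positivity) (by norm_num), Real.rpow_neg (by norm_num : (0:ℝ) ≤ 2)]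
        field_simp

lemma cast_pow_eq_rpow (hd : 1 ≤ d) (n : ℕ) :
    ((n:ℝ)+1)^(d-1) = ((n:ℝ)+1)^((d:ℝ)-1) := by
  rw [← Real.rpow_natCast ((n:ℝ)+1) (d-1)]
  congr 1
  have : ((d-1:ℕ):ℝ) = (d:ℝ)-1 := by
    have : 1 ≤ (d:ℝ) := by exact_mod_cast hd
    push_cast [Nat.cast_sub hd]
    ring
  rw [this]

lemma ball_sum_le (hd : 1 ≤ d) {l : ℝ} (hl0 : 0 < l) (hld : l < d) :
    ∃ A : ℝ, 0 < A ∧ ∀ R : ℕ,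
      ∑ y ∈ ball d R, jap y ^ (-l) ≤ A * ((R:ℝ)+1)^((d:ℝ)-l) := by
  obtain ⟨A₂, hA₂, hN2⟩ := N2 ((d:ℝ)-1-l) (by linarith)
  refine ⟨2^l * (2*(d:ℝ)*3^(d-1)) * A₂, by positivity, fun R => ?_⟩
  have hstep := sum_ball_le hd (fun y => jap y ^ (-l))
    (fun n => 2^l * ((n:ℝ)+1)^(-l)) (fun n => by positivity)
    (fun y => jap_rpow_le hd y hl0) R
  have heq : ∀ n ∈ Finset.range (R+1),
      (2*(d:ℝ)*3^(d-1)) * ((n:ℝ)+1)^(d-1) * (2^l * ((n:ℝ)+1)^(-l))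
      = (2^l * (2*(d:ℝ)*3^(d-1))) * ((n:ℝ)+1)^((d:ℝ)-1-l) := by
    intro n _
    rw [cast_pow_eq_rpow hd n]
    rw [show ((d:ℝ)-1-l) = ((d:ℝ)-1) + (-l) by ring]
    rw [Real.rpow_add (by positivity)]
    ring
  rw [Finset.sum_congr rfl heq] at hstep
  rw [← Finset.mul_sum] at hstep
  calc ∑ y ∈ ball d R, jap y ^ (-l)
      ≤ (2^l * (2*(d:ℝ)*3^(d-1))) * ∑ n ∈ Finset.range (R+1), ((n:ℝ)+1)^((d:ℝ)-1-l) :=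
        hstep
    _ ≤ (2^l * (2*(d:ℝ)*3^(d-1))) * (A₂ * ((R:ℝ)+1)^(((d:ℝ)-1-l)+1)) := by
        apply mul_le_mul_of_nonneg_left _ (by positivity)
        exact hN2 R
    _ = (2^l * (2*(d:ℝ)*3^(d-1)) * A₂) * ((R:ℝ)+1)^((d:ℝ)-l) := by
        rw [show ((d:ℝ)-1-l)+1 = (d:ℝ)-l by ring]
        ring

lemma tail_sum_le (hd : 1 ≤ d) {r : ℝ} (hr : (d:ℝ) < r) :
    ∃ A : ℝ, 0 < A ∧ ∀ R M : ℕ,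
      ∑ y ∈ ball d M, (if R < 2 * Nm y then jap y ^ (-r) else 0)
        ≤ A * ((R:ℝ)+1)^((d:ℝ)-r) := by
  have hd1 : (1:ℝ) ≤ (d:ℝ) := by exact_mod_cast hd
  have hr0 : 0 < r := by linarith
  obtain ⟨A₁, hA₁, hN1⟩ := N1 ((d:ℝ)-1-r) (by linarith)
  refine ⟨2^r * (2*(d:ℝ)*3^(d-1)) * A₁ * 2^(r-(d:ℝ)), by positivity, fun R M => ?_⟩
  have hstep := sum_ball_le hd
    (fun y => if R < 2 * Nm y then jap y ^ (-r) else 0)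
    (fun n => if R < 2 * n then 2^r * ((n:ℝ)+1)^(-r) else 0)
    (fun n => by positivity)
    (fun y => by
      by_cases h : R < 2 * Nm y
      · simp only [if_pos h]
        exact jap_rpow_le hd y hr0
      · simp [if_neg h])
    M
  have heq : ∀ n ∈ Finset.range (M+1),
      (2*(d:ℝ)*3^(d-1)) * ((n:ℝ)+1)^(d-1) * (if R < 2 * n then 2^r * ((n:ℝ)+1)^(-r) else 0)
      = (if R < 2 * n then (2^r * (2*(d:ℝ)*3^(d-1))) * ((n:ℝ)+1)^((d:ℝ)-1-r) else 0) := by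
    intro n _
    by_cases h : R < 2 * n
    · rw [if_pos h, if_pos h, cast_pow_eq_rpow hd n,
        show ((d:ℝ)-1-r) = ((d:ℝ)-1) + (-r) by ring,
        Real.rpow_add (by positivity)]
      ring
    · simp [if_neg h]
  rw [Finset.sum_congr rfl heq] at hstep
  have hfilter : Finset.filter (fun n => R < 2 * n) (Finset.range (M+1))
      = Finset.Ico (R/2+1) (M+1) := by
    ext n
    simp only [Finset.mem_filter, Finset.mem_range, Finset.mem_Ico]
    omega
  have hR2 : ∑ n ∈ Finset.range (M+1),
      (if R < 2 * n then (2^r * (2*(d:ℝ)*3^(d-1))) * ((n:ℝ)+1)^((d:ℝ)-1-r) else 0)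
      = (2^r * (2*(d:ℝ)*3^(d-1))) *
          ∑ n ∈ Finset.Ico (R/2+1) (M+1), ((n:ℝ)+1)^((d:ℝ)-1-r) := by
    rw [← Finset.sum_filter, hfilter, Finset.mul_sum]
  rw [hR2] at hstep
  have hN := hN1 (R/2+1) (M+1)
  have hcast : (((R/2+1:ℕ)):ℝ)+1 = ((R/2:ℕ):ℝ)+2 := by push_cast; ring
  rw [hcast] at hN
  have hbase : ((R:ℝ)+1)/2 ≤ ((R/2:ℕ):ℝ)+2 := by
    have h1 : R ≤ 2*(R/2)+1 := by omega
    have h2 : (R:ℝ) ≤ 2*((R/2:ℕ):ℝ)+1 := by exact_mod_cast h1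
    linarith
  have hexp : ((d:ℝ)-1-r)+1 = (d:ℝ)-r := by ring
  rw [hexp] at hN
  have hkey : (((R/2:ℕ):ℝ)+2)^((d:ℝ)-r) ≤ 2^(r-(d:ℝ)) * ((R:ℝ)+1)^((d:ℝ)-r) := by
    calc (((R/2:ℕ):ℝ)+2)^((d:ℝ)-r) ≤ (((R:ℝ)+1)/2)^((d:ℝ)-r) :=
          Real.rpow_le_rpow_of_nonpos (by positivity) hbase (by linarith)
      _ = ((R:ℝ)+1)^((d:ℝ)-r) * 2^(r-(d:ℝ)) := by
          rw [Real.div_rpow (by positivity) (by norm_num)]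
          rw [show (r-(d:ℝ)) = -((d:ℝ)-r) by ring, Real.rpow_neg (by norm_num : (0:ℝ) ≤ 2)]
          field_simp
      _ = 2^(r-(d:ℝ)) * ((R:ℝ)+1)^((d:ℝ)-r) := by ring
  calc ∑ y ∈ ball d M, (if R < 2 * Nm y then jap y ^ (-r) else 0)
      ≤ (2^r * (2*(d:ℝ)*3^(d-1))) *
          ∑ n ∈ Finset.Ico (R/2+1) (M+1), ((n:ℝ)+1)^((d:ℝ)-1-r) := hstep
    _ ≤ (2^r * (2*(d:ℝ)*3^(d-1))) * (A₁ * ((((R/2:ℕ):ℝ)+2)^((d:ℝ)-r))) := by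
        apply mul_le_mul_of_nonneg_left _ (by positivity)
        exact hN
    _ ≤ (2^r * (2*(d:ℝ)*3^(d-1))) * (A₁ * (2^(r-(d:ℝ)) * ((R:ℝ)+1)^((d:ℝ)-r))) := by
        apply mul_le_mul_of_nonneg_left _ (by positivity)
        exact mul_le_mul_of_nonneg_left hkey hA₁.le
    _ = (2^r * (2*(d:ℝ)*3^(d-1)) * A₁ * 2^(r-(d:ℝ))) * ((R:ℝ)+1)^((d:ℝ)-r) := by ring

lemma sum_ite_le {ι : Type*} (u s : Finset ι) (p : ι → Prop) [DecidablePred p]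
    (g : ι → ℝ) (hg : ∀ i, 0 ≤ g i) (hp : ∀ i, p i → i ∈ s) :
    ∑ i ∈ u, (if p i then g i else 0) ≤ ∑ i ∈ s, g i := by
  rw [← Finset.sum_filter]
  exact Finset.sum_le_sum_of_subset_of_nonneg
    (fun i hi => hp i (Finset.mem_filter.mp hi).2) (fun i _ _ => hg i)

lemma ite_nonneg {c : Prop} [Decidable c] {a : ℝ} (h : 0 ≤ a) :
    0 ≤ (if c then a else 0) := by
  split
  · exact h
  · exact le_refl 0

lemma div_rpow_neg {a b : ℝ} (ha : 0 ≤ a) (hb : 0 < b) (r : ℝ) :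
    (a/b)^(-r) = b^r * a^(-r) := by
  rw [Real.div_rpow ha hb.le, Real.rpow_neg hb.le, div_eq_mul_inv, inv_inv]
  ring

end Stmt5

open Stmt5 in
theorem statement5 (d : ℕ) (hd : 1 ≤ d) (k l : ℝ)
    (hk : k < d) (hl : l < d) (hkl : (d : ℝ) < k + l) :
    ∃ C > 0, ∀ x : Fin d → ℤ,
      (Summable fun y => jap (x - y) ^ (-k) * jap y ^ (-l)) ∧
      ∑' y, jap (x - y) ^ (-k) * jap y ^ (-l) ≤ C * jap x ^ ((d : ℝ) - k - l) := by
  have hk0 : 0 < k := by linarith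
  have hl0 : 0 < l := by linarith
  have hd1 : (1:ℝ) ≤ (d:ℝ) := by exact_mod_cast hd
  obtain ⟨Al, hAl, hBl⟩ := ball_sum_le hd hl0 hl
  obtain ⟨Ak, hAk, hBk⟩ := ball_sum_le hd hk0 hk
  obtain ⟨At, hAt, hBt⟩ := tail_sum_le hd (r := k + l) hkl
  set sd : ℝ := Real.sqrt d with hsd_def
  have hsd1 : (1:ℝ) ≤ sd := by
    rw [hsd_def, show (1:ℝ) = Real.sqrt 1 by simp]
    exact Real.sqrt_le_sqrt hd1
  have hsd0 : (0:ℝ) < sd := by linarith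
  set K : ℝ := 4^k * Al + 4^l * Ak + ((2*sd)^k + (2*sd)^l) * At with hK_def
  have hKpos : 0 < K := by positivity
  refine ⟨K * sd^(k+l-(d:ℝ)), by positivity, fun x => ?_⟩
  set R := Nm x with hR_def
  set f : (Fin d → ℤ) → ℝ := fun y => jap (x - y) ^ (-k) * jap y ^ (-l) with hf_def
  have hf0 : ∀ y, 0 ≤ f y := fun y =>
    mul_nonneg (Real.rpow_nonneg (jap_pos _).le _) (Real.rpow_nonneg (jap_pos _).le _)
  set F1 : (Fin d → ℤ) → ℝ := fun y =>
    4^k * ((R:ℝ)+1)^(-k) * (if Nm y ≤ R then jap y ^ (-l) else 0) with hF1_def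
  set F2 : (Fin d → ℤ) → ℝ := fun y =>
    4^l * ((R:ℝ)+1)^(-l) * (if Nm (x-y) ≤ R then jap (x-y) ^ (-k) else 0) with hF2_def
  set F3 : (Fin d → ℤ) → ℝ := fun y =>
    (2*sd)^k * (if R < 2 * Nm y then jap y ^ (-(k+l)) else 0) with hF3_def
  set F4 : (Fin d → ℤ) → ℝ := fun y =>
    (2*sd)^l * (if R < 2 * Nm (x-y) then jap (x-y) ^ (-(k+l)) else 0) with hF4_def
  have hF10 : ∀ y, 0 ≤ F1 y := fun y =>
    mul_nonneg (by positivity) (ite_nonneg (Real.rpow_nonneg (jap_pos _).le _))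
  have hF20 : ∀ y, 0 ≤ F2 y := fun y =>
    mul_nonneg (by positivity) (ite_nonneg (Real.rpow_nonneg (jap_pos _).le _))
  have hF30 : ∀ y, 0 ≤ F3 y := fun y =>
    mul_nonneg (by positivity) (ite_nonneg (Real.rpow_nonneg (jap_pos _).le _))
  have hF40 : ∀ y, 0 ≤ F4 y := fun y =>
    mul_nonneg (by positivity) (ite_nonneg (Real.rpow_nonneg (jap_pos _).le _))
  -- pointwise bound
  have hpt : ∀ y, f y ≤ F1 y + F2 y + F3 y + F4 y := by
    intro y
    have htri := Nm_triangle x y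
    by_cases h1 : 2 * Nm y ≤ R
    · -- f y ≤ F1 y
      have hR2 : R ≤ 2 * Nm (x - y) := by omega
      have hjlow : ((R:ℝ)+1)/4 ≤ jap (x-y) := by
        have h := le_jap hd (x-y)
        have hc : (R:ℝ) ≤ 2*((Nm (x-y):ℝ)) := by exact_mod_cast hR2
        linarith
      have hjk : jap (x-y) ^ (-k) ≤ 4^k * ((R:ℝ)+1)^(-k) := by
        calc jap (x-y) ^ (-k) ≤ (((R:ℝ)+1)/4)^(-k) :=
              Real.rpow_le_rpow_of_nonpos (by positivity) hjlow (by linarith)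
          _ = 4^k * ((R:ℝ)+1)^(-k) := div_rpow_neg (by positivity) (by norm_num) k
      have hle1 : f y ≤ F1 y := by
        have hyR : Nm y ≤ R := by omega
        have : F1 y = 4^k * ((R:ℝ)+1)^(-k) * jap y ^ (-l) := by
          rw [hF1_def]; simp [if_pos hyR]
        rw [this, hf_def]
        exact mul_le_mul_of_nonneg_right hjk (Real.rpow_nonneg (jap_pos _).le _)
      linarith [hF20 y, hF30 y, hF40 y]
    · by_cases h2 : 2 * Nm (x - y) ≤ R
      · -- f y ≤ F2 y
        have hR2 : R ≤ 2 * Nm y := by omega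
        have hjlow : ((R:ℝ)+1)/4 ≤ jap y := by
          have h := le_jap hd y
          have hc : (R:ℝ) ≤ 2*((Nm y:ℝ)) := by exact_mod_cast hR2
          linarith
        have hjl : jap y ^ (-l) ≤ 4^l * ((R:ℝ)+1)^(-l) := by
          calc jap y ^ (-l) ≤ (((R:ℝ)+1)/4)^(-l) :=
                Real.rpow_le_rpow_of_nonpos (by positivity) hjlow (by linarith)
            _ = 4^l * ((R:ℝ)+1)^(-l) := div_rpow_neg (by positivity) (by norm_num) l
        have hle2 : f y ≤ F2 y := by
          have hyR : Nm (x-y) ≤ R := by omega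
          have : F2 y = 4^l * ((R:ℝ)+1)^(-l) * jap (x-y) ^ (-k) := by
            rw [hF2_def]; simp [if_pos hyR]
          rw [this, hf_def]
          calc jap (x - y) ^ (-k) * jap y ^ (-l)
              ≤ jap (x - y) ^ (-k) * (4^l * ((R:ℝ)+1)^(-l)) :=
                mul_le_mul_of_nonneg_left hjl (Real.rpow_nonneg (jap_pos _).le _)
            _ = 4^l * ((R:ℝ)+1)^(-l) * jap (x-y) ^ (-k) := by ring
        linarith [hF10 y, hF30 y, hF40 y]
      · push_neg at h1 h2
        rcases le_or_gt (Nm y) (Nm (x-y)) with hc | hc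
        · -- f y ≤ F3 y
          have hup : jap y ≤ (2*sd) * jap (x-y) := by
            have e1 := jap_le hd y
            have e2 := le_jap hd (x-y)
            have e3 : ((Nm y:ℝ)) ≤ ((Nm (x-y):ℝ)) := by exact_mod_cast hc
            nlinarith
          have hjk : jap (x-y) ^ (-k) ≤ (2*sd)^k * jap y ^ (-k) := by
            have hlow : jap y / (2*sd) ≤ jap (x-y) := by
              rw [div_le_iff₀ (by positivity)]
              calc jap y ≤ (2*sd) * jap (x-y) := hup
                _ = jap (x-y) * (2*sd) := by ring
            calc jap (x-y) ^ (-k) ≤ (jap y / (2*sd))^(-k) :=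
                  Real.rpow_le_rpow_of_nonpos
                    (div_pos (jap_pos _) (by linarith)) hlow (by linarith)
              _ = (2*sd)^k * jap y ^ (-k) :=
                  div_rpow_neg (jap_pos _).le (by linarith) k
          have hle3 : f y ≤ F3 y := by
            have : F3 y = (2*sd)^k * jap y ^ (-(k+l)) := by
              rw [hF3_def]; simp [if_pos h1]
            rw [this, hf_def]
            calc jap (x - y) ^ (-k) * jap y ^ (-l)
                ≤ ((2*sd)^k * jap y ^ (-k)) * jap y ^ (-l) :=
                  mul_le_mul_of_nonneg_right hjk (Real.rpow_nonneg (jap_pos _).le _)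
              _ = (2*sd)^k * (jap y ^ (-k) * jap y ^ (-l)) := by ring
              _ = (2*sd)^k * jap y ^ (-(k+l)) := by
                  rw [← Real.rpow_add (jap_pos _)]
                  congr 1
                  ring
          linarith [hF10 y, hF20 y, hF40 y]
        · -- f y ≤ F4 y
          have hup : jap (x-y) ≤ (2*sd) * jap y := by
            have e1 := jap_le hd (x-y)
            have e2 := le_jap hd y
            have e3 : ((Nm (x-y):ℝ)) ≤ ((Nm y:ℝ)) := by exact_mod_cast hc.le
            nlinarith
          have hjl : jap y ^ (-l) ≤ (2*sd)^l * jap (x-y) ^ (-l) := by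
            have hlow : jap (x-y) / (2*sd) ≤ jap y := by
              rw [div_le_iff₀ (by positivity)]
              calc jap (x-y) ≤ (2*sd) * jap y := hup
                _ = jap y * (2*sd) := by ring
            calc jap y ^ (-l) ≤ (jap (x-y) / (2*sd))^(-l) :=
                  Real.rpow_le_rpow_of_nonpos
                    (div_pos (jap_pos _) (by linarith)) hlow (by linarith)
              _ = (2*sd)^l * jap (x-y) ^ (-l) :=
                  div_rpow_neg (jap_pos _).le (by linarith) l
          have hle4 : f y ≤ F4 y := by
            have : F4 y = (2*sd)^l * jap (x-y) ^ (-(k+l)) := by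
              rw [hF4_def]; simp [if_pos h2]
            rw [this, hf_def]
            calc jap (x - y) ^ (-k) * jap y ^ (-l)
                ≤ jap (x - y) ^ (-k) * ((2*sd)^l * jap (x-y) ^ (-l)) :=
                  mul_le_mul_of_nonneg_left hjl (Real.rpow_nonneg (jap_pos _).le _)
              _ = (2*sd)^l * (jap (x-y) ^ (-k) * jap (x-y) ^ (-l)) := by ring
              _ = (2*sd)^l * jap (x-y) ^ (-(k+l)) := by
                  rw [← Real.rpow_add (jap_pos _)]
                  congr 1
                  ring
          linarith [hF10 y, hF20 y, hF30 y]
  -- rpow product on (R+1)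
  have hRpos : (0:ℝ) < (R:ℝ)+1 := by positivity
  have hmulk : ((R:ℝ)+1)^(-k) * ((R:ℝ)+1)^((d:ℝ)-l) = ((R:ℝ)+1)^((d:ℝ)-k-l) := by
    rw [← Real.rpow_add hRpos]; congr 1; ring
  have hmull : ((R:ℝ)+1)^(-l) * ((R:ℝ)+1)^((d:ℝ)-k) = ((R:ℝ)+1)^((d:ℝ)-k-l) := by
    rw [← Real.rpow_add hRpos]; congr 1; ring
  have hinj : ∀ u : Finset (Fin d → ℤ), ∀ a ∈ u, ∀ b ∈ u, x - a = x - b → a = b := by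
    intro u a _ b _ hab
    have := sub_right_injective hab
    exact this
  -- bounds on partial sums of the majorants
  have hS1 : ∀ u : Finset (Fin d → ℤ),
      ∑ y ∈ u, F1 y ≤ 4^k * Al * ((R:ℝ)+1)^((d:ℝ)-k-l) := by
    intro u
    have e : ∑ y ∈ u, F1 y
        = 4^k * ((R:ℝ)+1)^(-k) * ∑ y ∈ u, (if Nm y ≤ R then jap y ^ (-l) else 0) := by
      rw [Finset.mul_sum]
    rw [e]
    have h := sum_ite_le u (ball d R) (fun y => Nm y ≤ R)
      (fun y => jap y ^ (-l)) (fun y => Real.rpow_nonneg (jap_pos _).le _)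
      (fun y hy => mem_ball.mpr hy)
    calc 4^k * ((R:ℝ)+1)^(-k) * ∑ y ∈ u, (if Nm y ≤ R then jap y ^ (-l) else 0)
        ≤ 4^k * ((R:ℝ)+1)^(-k) * (Al * ((R:ℝ)+1)^((d:ℝ)-l)) := by
          apply mul_le_mul_of_nonneg_left _ (by positivity)
          exact h.trans (hBl R)
      _ = 4^k * Al * (((R:ℝ)+1)^(-k) * ((R:ℝ)+1)^((d:ℝ)-l)) := by ring
      _ = 4^k * Al * ((R:ℝ)+1)^((d:ℝ)-k-l) := by rw [hmulk]
  have hS2 : ∀ u : Finset (Fin d → ℤ),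
      ∑ y ∈ u, F2 y ≤ 4^l * Ak * ((R:ℝ)+1)^((d:ℝ)-k-l) := by
    intro u
    have e : ∑ y ∈ u, F2 y
        = 4^l * ((R:ℝ)+1)^(-l) *
            ∑ z ∈ u.image (fun y => x - y), (if Nm z ≤ R then jap z ^ (-k) else 0) := by
      rw [Finset.sum_image (hinj u), Finset.mul_sum]
    rw [e]
    have h := sum_ite_le (u.image (fun y => x - y)) (ball d R) (fun z => Nm z ≤ R)
      (fun z => jap z ^ (-k)) (fun z => Real.rpow_nonneg (jap_pos _).le _)
      (fun z hz => mem_ball.mpr hz)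
    calc 4^l * ((R:ℝ)+1)^(-l) *
            ∑ z ∈ u.image (fun y => x - y), (if Nm z ≤ R then jap z ^ (-k) else 0)
        ≤ 4^l * ((R:ℝ)+1)^(-l) * (Ak * ((R:ℝ)+1)^((d:ℝ)-k)) := by
          apply mul_le_mul_of_nonneg_left _ (by positivity)
          exact h.trans (hBk R)
      _ = 4^l * Ak * (((R:ℝ)+1)^(-l) * ((R:ℝ)+1)^((d:ℝ)-k)) := by ring
      _ = 4^l * Ak * ((R:ℝ)+1)^((d:ℝ)-k-l) := by rw [hmull]
  have hexp : ((d:ℝ)-(k+l)) = (d:ℝ)-k-l := by ring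
  have hS3 : ∀ u : Finset (Fin d → ℤ),
      ∑ y ∈ u, F3 y ≤ (2*sd)^k * At * ((R:ℝ)+1)^((d:ℝ)-k-l) := by
    intro u
    set M := u.sup Nm with hM_def
    have hsub : u ⊆ ball d M := fun y hy => mem_ball.mpr (Finset.le_sup (f := Nm) hy)
    have e : ∑ y ∈ u, F3 y
        = (2*sd)^k * ∑ y ∈ u, (if R < 2 * Nm y then jap y ^ (-(k+l)) else 0) := by
      rw [Finset.mul_sum]
    rw [e]
    have h1 : ∑ y ∈ u, (if R < 2 * Nm y then jap y ^ (-(k+l)) else 0)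
        ≤ ∑ y ∈ ball d M, (if R < 2 * Nm y then jap y ^ (-(k+l)) else 0) :=
      Finset.sum_le_sum_of_subset_of_nonneg hsub
        (fun y _ _ => ite_nonneg (Real.rpow_nonneg (jap_pos _).le _))
    calc (2*sd)^k * ∑ y ∈ u, (if R < 2 * Nm y then jap y ^ (-(k+l)) else 0)
        ≤ (2*sd)^k * (At * ((R:ℝ)+1)^((d:ℝ)-(k+l))) := by
          apply mul_le_mul_of_nonneg_left _ (by positivity)
          exact h1.trans (hBt R M)
      _ = (2*sd)^k * At * ((R:ℝ)+1)^((d:ℝ)-k-l) := by rw [hexp]; ring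
  have hS4 : ∀ u : Finset (Fin d → ℤ),
      ∑ y ∈ u, F4 y ≤ (2*sd)^l * At * ((R:ℝ)+1)^((d:ℝ)-k-l) := by
    intro u
    set v := u.image (fun y => x - y) with hv_def
    set M := v.sup Nm with hM_def
    have hsub : v ⊆ ball d M := fun z hz => mem_ball.mpr (Finset.le_sup (f := Nm) hz)
    have e : ∑ y ∈ u, F4 y
        = (2*sd)^l * ∑ z ∈ v, (if R < 2 * Nm z then jap z ^ (-(k+l)) else 0) := by
      rw [hv_def, Finset.sum_image (hinj u), Finset.mul_sum]
    rw [e]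
    have h1 : ∑ z ∈ v, (if R < 2 * Nm z then jap z ^ (-(k+l)) else 0)
        ≤ ∑ z ∈ ball d M, (if R < 2 * Nm z then jap z ^ (-(k+l)) else 0) :=
      Finset.sum_le_sum_of_subset_of_nonneg hsub
        (fun z _ _ => ite_nonneg (Real.rpow_nonneg (jap_pos _).le _))
    calc (2*sd)^l * ∑ z ∈ v, (if R < 2 * Nm z then jap z ^ (-(k+l)) else 0)
        ≤ (2*sd)^l * (At * ((R:ℝ)+1)^((d:ℝ)-(k+l))) := by
          apply mul_le_mul_of_nonneg_left _ (by positivity)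
          exact h1.trans (hBt R M)
      _ = (2*sd)^l * At * ((R:ℝ)+1)^((d:ℝ)-k-l) := by rw [hexp]; ring
  -- comparison with jap x
  have hjapx : ((R:ℝ)+1)^((d:ℝ)-k-l) ≤ sd^(k+l-(d:ℝ)) * jap x ^ ((d:ℝ)-k-l) := by
    have hxup : jap x ≤ sd * ((R:ℝ)+1) := jap_le hd x
    have h1 : (sd * ((R:ℝ)+1))^((d:ℝ)-k-l) ≤ jap x ^ ((d:ℝ)-k-l) :=
      Real.rpow_le_rpow_of_nonpos (jap_pos x) hxup (by linarith)
    have h2 : (sd * ((R:ℝ)+1))^((d:ℝ)-k-l)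
        = sd^((d:ℝ)-k-l) * ((R:ℝ)+1)^((d:ℝ)-k-l) :=
      Real.mul_rpow hsd0.le (by positivity)
    have h3 : sd^(k+l-(d:ℝ)) * sd^((d:ℝ)-k-l) = 1 := by
      rw [← Real.rpow_add hsd0, show (k+l-(d:ℝ)) + ((d:ℝ)-k-l) = 0 by ring,
        Real.rpow_zero]
    calc ((R:ℝ)+1)^((d:ℝ)-k-l)
        = sd^(k+l-(d:ℝ)) * (sd^((d:ℝ)-k-l) * ((R:ℝ)+1)^((d:ℝ)-k-l)) := by
          rw [← mul_assoc, h3, one_mul]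
      _ = sd^(k+l-(d:ℝ)) * (sd * ((R:ℝ)+1))^((d:ℝ)-k-l) := by rw [h2]
      _ ≤ sd^(k+l-(d:ℝ)) * jap x ^ ((d:ℝ)-k-l) := by
          apply mul_le_mul_of_nonneg_left h1 (by positivity)
  -- final bound on partial sums
  have hfinal : ∀ u : Finset (Fin d → ℤ),
      ∑ y ∈ u, f y ≤ (K * sd^(k+l-(d:ℝ))) * jap x ^ ((d:ℝ)-k-l) := by
    intro u
    calc ∑ y ∈ u, f y ≤ ∑ y ∈ u, (F1 y + F2 y + F3 y + F4 y) :=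
          Finset.sum_le_sum (fun y _ => hpt y)
      _ = ∑ y ∈ u, F1 y + ∑ y ∈ u, F2 y + ∑ y ∈ u, F3 y + ∑ y ∈ u, F4 y := by
          rw [Finset.sum_add_distrib, Finset.sum_add_distrib, Finset.sum_add_distrib]
      _ ≤ 4^k * Al * ((R:ℝ)+1)^((d:ℝ)-k-l) + 4^l * Ak * ((R:ℝ)+1)^((d:ℝ)-k-l)
            + (2*sd)^k * At * ((R:ℝ)+1)^((d:ℝ)-k-l)
            + (2*sd)^l * At * ((R:ℝ)+1)^((d:ℝ)-k-l) := by
          have := hS1 u; have := hS2 u; have := hS3 u; have := hS4 u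
          linarith [hS1 u, hS2 u, hS3 u, hS4 u]
      _ = K * ((R:ℝ)+1)^((d:ℝ)-k-l) := by rw [hK_def]; ring
      _ ≤ K * (sd^(k+l-(d:ℝ)) * jap x ^ ((d:ℝ)-k-l)) :=
          mul_le_mul_of_nonneg_left hjapx hKpos.le
      _ = (K * sd^(k+l-(d:ℝ))) * jap x ^ ((d:ℝ)-k-l) := by ring
  have hsummable : Summable f := summable_of_sum_le (fun y => hf0 y) hfinal
  exact ⟨hsummable, hsummable.tsum_le_of_sum_le hfinal⟩
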